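/- arXiv:2312.17412 — 2 statements merged into one kernel-verified Lean document; each statement's English description precedes it below -/
import Mathlib

section
/- Let η > 0, φ ∈ ℝ, and let (a_k) be complex numbers satisfying a_{k+1} = a_k + η if k is odd and a_{k+1} = a_k + η·e^{iφ} if k is even, for 1 < k ≤ 2n+1, together with e^{−iφ}·a₂ − η = a_{2n+1} (where a_{2n+1} = a_{2n+2} − η and a_{2n+2} = e^{−iφ} a₂). Then for all 1 ≤ k ≤ 2n+1, e^{−iφ}·a_{k+1} − η = a_{2n+k}. -/
theorem stmt_9 (η φ : ℝ) (hη : 0 < η) (n : ℕ) (a : ℕ → ℂ)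
    (hrec₁ : ∀ k, 1 < k → k ≤ 2 * n + 1 →
      (Odd k → a (k + 1) = a k + (η : ℂ)) ∧
      (Even k → a (k + 1) = a k + (η : ℂ) * Complex.exp (Complex.I * ↑φ)))
    (hrec₂ : ∀ k, 2 * n + 1 < k → k ≤ 4 * n + 2 →
      (Odd k → a (k + 1) = a k + (η : ℂ)) ∧
      (Even k → a (k + 1) = a k + (η : ℂ) * Complex.exp (-(Complex.I * ↑φ))))
    (hbase : Complex.exp (-(Complex.I * ↑φ)) * a 2 - (η : ℂ) = a (2 * n + 1)) :
    ∀ k, 1 ≤ k → k ≤ 2 * n + 1 →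
      Complex.exp (-(Complex.I * ↑φ)) * a (k + 1) - (η : ℂ) = a (2 * n + k) := by
  have hexp : Complex.exp (-(Complex.I * ↑φ)) * Complex.exp (Complex.I * ↑φ) = 1 := by
    rw [← Complex.exp_add, neg_add_cancel, Complex.exp_zero]
  intro k hk1 hk2
  induction k with
  | zero => omega
  | succ k ih =>
    rcases Nat.eq_zero_or_pos k with rfl | hk
    · simpa using hbase
    · have ih' := ih hk (by omega)
      obtain ⟨ho, he⟩ := hrec₁ (k + 1) (by omega) hk2
      rcases Nat.even_or_odd k with hke | hko
      · have h1 := ho hke.add_one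
        have hk2'' : 2 ≤ k := by rcases hke with ⟨m, hm⟩; omega
        obtain ⟨_, he2⟩ := hrec₂ (2 * n + k) (by omega) (by omega)
        have h2 := he2 (by rcases hke with ⟨m, hm⟩; exact ⟨n + m, by omega⟩)
        show Complex.exp (-(Complex.I * ↑φ)) * a (k + 1 + 1) - (η : ℂ) = a (2 * n + k + 1)
        rw [h1, h2, ← ih']
        ring
      · have h1 := he (Odd.add_one hko)
        have h2 : a (2 * n + k + 1) = a (2 * n + k) + (η : ℂ) := by
          rcases Nat.eq_or_lt_of_le hk with h | h
          · -- k = 1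
            have hn : 1 ≤ n := by omega
            obtain ⟨ho1, _⟩ := hrec₁ (2 * n + k) (by omega) (by omega)
            exact ho1 (by rcases hko with ⟨m, hm⟩; exact ⟨n + m, by omega⟩)
          · have hk3 : 2 ≤ k := h
            obtain ⟨ho2, _⟩ := hrec₂ (2 * n + k) (by omega) (by omega)
            exact ho2 (by rcases hko with ⟨m, hm⟩; exact ⟨n + m, by omega⟩)
        show Complex.exp (-(Complex.I * ↑φ)) * a (k + 1 + 1) - (η : ℂ) = a (2 * n + k + 1)
        rw [h1, h2, ← ih', mul_add, mul_comm ((η:ℂ)) _, ← mul_assoc, hexp]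
        ring
end

section
/- Let n ≥ 1, l > 0, η > 0, I = [0, 2l + (4n+1)η), and let f : I → I be defined by f(x) = x + l + 4nη for x ∈ [0, l+η), f(x) = x + (2n−1)η for x ∈ [l+η, l+(2n+1)η), f(x) = x − (2n+1)η for x ∈ [l+(2n+1)η, l+(4n+1)η), and f(x) = x − l − (4n+1)η for x ∈ [l+(4n+1)η, 2l+(4n+1)η). Then for all 0 ≤ k ≤ n−1, f^{2k+1}(l + η) = l + (2n − 2k)η, and consequently f^{2n}(l + η) = l + (2n+1)η. -/
theorem stmt_11 (n : ℕ) (hn : 1 ≤ n) (l η : ℝ) (hl : 0 < l) (hη : 0 < η)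
    (f : ℝ → ℝ)
    (hf : ∀ x, f x =
      if x < l + η then x + l + 4 * n * η
      else if x < l + (2 * n + 1) * η then x + (2 * n - 1) * η
      else if x < l + (4 * n + 1) * η then x - (2 * n + 1) * η
      else x - l - (4 * n + 1) * η) :
    (∀ k : ℕ, k ≤ n - 1 →
      f^[2 * k + 1] (l + η) = l + (2 * (n : ℝ) - 2 * (k : ℝ)) * η) ∧
    f^[2 * n] (l + η) = l + (2 * (n : ℝ) + 1) * η := by
  have hn' : (1:ℝ) ≤ n := by exact_mod_cast hn
  have key : ∀ k : ℕ, k + 1 ≤ n →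
      f^[2 * k + 1] (l + η) = l + (2 * (n : ℝ) - 2 * (k : ℝ)) * η := by
    intro k hk
    induction k with
    | zero =>
      rw [show 2*0+1 = 1 by norm_num, Function.iterate_one, hf]
      rw [if_neg (lt_irrefl _), if_pos (by nlinarith)]
      push_cast; ring
    | succ k ih =>
      have hk' : k + 1 ≤ n := by omega
      have hkn : (k:ℝ) + 2 ≤ n := by exact_mod_cast hk
      have s1 : f (l + (2 * (n:ℝ) - 2 * (k:ℝ)) * η) = l + (4*(n:ℝ) - 2*k - 1) * η := by
        rw [hf, if_neg (by nlinarith), if_pos (by nlinarith)]; ring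
      have s2 : f (l + (4*(n:ℝ) - 2*(k:ℝ) - 1) * η) = l + (2*(n:ℝ) - 2*((k:ℝ)+1)) * η := by
        rw [hf, if_neg (by nlinarith), if_neg (by nlinarith), if_pos (by nlinarith)]; ring
      rw [show 2*(k+1)+1 = (2*k+1)+1+1 by ring,
        Function.iterate_succ_apply', Function.iterate_succ_apply', ih hk', s1, s2]
      push_cast; ring
  constructor
  · intro k hk
    exact key k (by omega)
  · have h1 := key (n-1) (by omega)
    have hc : ((n - 1 : ℕ) : ℝ) = (n:ℝ) - 1 := by
      have : (1:ℕ) ≤ n := hn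
      push_cast [this]; ring
    rw [hc] at h1
    have : 2 * n = (2 * (n-1) + 1) + 1 := by omega
    rw [this, Function.iterate_succ_apply', h1, hf]
    rw [if_neg (by nlinarith), if_pos (by nlinarith)]
    push_cast; ring
end
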